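/- Let n > 1 be non-intersecting, let p be the smallest prime dividing n, and let q_1, ..., q_p be distinct primes each dividing n/p. Then for any choice of residues a_d making {a_d mod d : d | n, d > 1} a CD congruence set, there exist indices i ≠ j with a_{p·q_i} ≡ a_{p·q_j} (mod p). (This is the pigeonhole step: if all a_{p·q_i} mod p were distinct for 1 ≤ i ≤ p, one would coincide with a_p mod p, contradicting the CD property.) -/
import Mathlib


/-- Let `n > 1` be non-intersecting via residues `a d` (so `{a d mod d : d ∣ n, d > 1}` is
a CD congruence set), let `p = n.minFac` be the smallest prime dividing `n`, and let
`q 1, …, q p` be distinct primes each dividing `n / p`. Then there exist indices `i ≠ j`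
with `a (p * q i) ≡ a (p * q j) (mod p)`. -/
theorem pigeonhole_step (n : ℕ) (hn : 1 < n) (a : ℕ → ℤ)
    (hCD : ∀ d d' : ℕ, d ∣ n → d' ∣ n → 1 < d → 1 < d' → d ≠ d' →
      (∃ x : ℤ, x ≡ a d [ZMOD (d : ℤ)] ∧ x ≡ a d' [ZMOD (d' : ℤ)]) →
      Nat.gcd d d' = 1)
    (q : Fin n.minFac → ℕ) (hq : ∀ i, (q i).Prime) (hqinj : Function.Injective q)
    (hqdvd : ∀ i, q i ∣ n / n.minFac) :
    ∃ i j : Fin n.minFac, i ≠ j ∧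
      a (n.minFac * q i) ≡ a (n.minFac * q j) [ZMOD (n.minFac : ℤ)] := by
  have hpprime : n.minFac.Prime := Nat.minFac_prime hn.ne'
  have hppos : 0 < n.minFac := hpprime.pos
  haveI : NeZero n.minFac := ⟨hppos.ne'⟩
  by_contra hcon
  push_neg at hcon
  have hf : Function.Injective
      (fun i : Fin n.minFac => ((a (n.minFac * q i) : ZMod n.minFac))) := by
    intro i j hij
    by_contra hne
    exact hcon i j hne ((ZMod.intCast_eq_intCast_iff _ _ _).mp hij)
  have hbij : Function.Bijective
      (fun i : Fin n.minFac => ((a (n.minFac * q i) : ZMod n.minFac))) := by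
    rw [Fintype.bijective_iff_injective_and_card]
    exact ⟨hf, by simp [ZMod.card]⟩
  obtain ⟨i, hi⟩ := hbij.surjective ((a n.minFac : ZMod n.minFac))
  have hmod : a (n.minFac * q i) ≡ a n.minFac [ZMOD (n.minFac : ℤ)] :=
    (ZMod.intCast_eq_intCast_iff _ _ _).mp hi
  have hqi2 : 1 < q i := (hq i).one_lt
  have hdvd : n.minFac * q i ∣ n := by
    have h := Nat.mul_dvd_mul_left n.minFac (hqdvd i)
    rwa [Nat.mul_div_cancel' (Nat.minFac_dvd n)] at h
  have hne : n.minFac ≠ n.minFac * q i := by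
    intro h
    nlinarith [hppos, hqi2]
  have hgcd := hCD n.minFac (n.minFac * q i) (Nat.minFac_dvd n) hdvd hpprime.one_lt
    (by nlinarith [hppos, hqi2]) hne
    ⟨a (n.minFac * q i), hmod, Int.ModEq.refl _⟩
  have hd : n.minFac ∣ Nat.gcd n.minFac (n.minFac * q i) :=
    Nat.dvd_gcd dvd_rfl (dvd_mul_right _ _)
  rw [hgcd] at hd
  exact absurd (Nat.eq_one_of_dvd_one hd) hpprime.one_lt.ne'
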